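/- arXiv:1501.07202 — 2 statements merged into one kernel-verified Lean document; each statement's English description precedes it below -/
import Mathlib

section
/- Let H be Hermitian, ρ₀ = ψ₀ψ₀† with ψ₀ a unit vector, and κ skew-Hermitian. Suppose H_H(t) satisfies the modified Heisenberg equation d/dt H_H = [H_H, {1 - 2ρ₀, κ(t)}]. Then the total energy ⟨ρ₀ | H_H(t)⟩ = Tr(ρ₀ H_H(t)) is conserved: its time derivative vanishes. -/
open Matrix

/-- If `H_H(t)` solves the modified Heisenberg equation
`d/dt H_H = [H_H, {1 - 2ρ₀, κ(t)}]` (ρ₀ = ψ₀ψ₀† a rank-one projection, κ(t) skew-Hermitian,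
H_H(t) Hermitian), then the total energy `Tr(ρ₀ H_H(t))` is conserved. -/
theorem stmt_3 {n : ℕ} (ψ₀ : Fin n → ℂ) (hψ : star ψ₀ ⬝ᵥ ψ₀ = 1)
    (HH κ : ℝ → Matrix (Fin n) (Fin n) ℂ)
    (hHerm : ∀ t, (HH t)ᴴ = HH t) (hκ : ∀ t, (κ t)ᴴ = -(κ t))
    (hder : ∀ t i j, HasDerivAt (fun s => HH s i j)
      ((HH t * ((1 - (2 : ℂ) • vecMulVec ψ₀ (star ψ₀)) * κ t
          + κ t * (1 - (2 : ℂ) • vecMulVec ψ₀ (star ψ₀)))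
        - ((1 - (2 : ℂ) • vecMulVec ψ₀ (star ψ₀)) * κ t
          + κ t * (1 - (2 : ℂ) • vecMulVec ψ₀ (star ψ₀))) * HH t) i j) t) :
    ∀ t, HasDerivAt (fun s => (vecMulVec ψ₀ (star ψ₀) * HH s).trace) 0 t := by
  intro t
  set ρ : Matrix (Fin n) (Fin n) ℂ := vecMulVec ψ₀ (star ψ₀) with hρdef
  have hψ' : ∑ k, star (ψ₀ k) * ψ₀ k = 1 := by
    simpa [dotProduct] using hψ
  have hρ2 : ρ * ρ = ρ := by
    ext i j
    simp only [hρdef, Matrix.mul_apply, vecMulVec_apply, Pi.star_apply]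
    have : ∑ k, ψ₀ i * star (ψ₀ k) * (ψ₀ k * star (ψ₀ j))
        = (ψ₀ i * star (ψ₀ j)) * ∑ k, star (ψ₀ k) * ψ₀ k := by
      rw [Finset.mul_sum]; apply Finset.sum_congr rfl; intro k _; ring
    rw [this, hψ', mul_one]
  have hρ2' : ∀ A : Matrix (Fin n) (Fin n) ℂ, ρ * (ρ * A) = ρ * A := by
    intro A; rw [← mul_assoc, hρ2]
  set X : Matrix (Fin n) (Fin n) ℂ :=
    (1 - (2 : ℂ) • ρ) * κ t + κ t * (1 - (2 : ℂ) • ρ) with hXdef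
  set D : Matrix (Fin n) (Fin n) ℂ := HH t * X - X * HH t with hDdef
  have comm : ρ * X = X * ρ := by
    simp only [hXdef, mul_add, add_mul, sub_mul, mul_sub, one_mul, mul_one,
      smul_mul_assoc, mul_smul_comm, mul_assoc, hρ2, hρ2']
    simp only [two_smul]
    abel
  have key : (ρ * D).trace = 0 := by
    have expand : ρ * D = ρ * HH t * X - X * (ρ * HH t) := by
      rw [hDdef, mul_sub, ← mul_assoc ρ X (HH t), comm, mul_assoc X ρ (HH t), ← mul_assoc ρ (HH t) X]
    rw [expand, trace_sub, trace_mul_comm X, sub_self]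
  have h : HasDerivAt (fun s => ∑ k, ∑ j, ρ k j * HH s j k)
      (∑ k, ∑ j, ρ k j * D j k) t := by
    apply HasDerivAt.fun_sum; intro k _
    apply HasDerivAt.fun_sum; intro j _
    exact (hder t j k).const_mul _
  have heq : (fun s => (ρ * HH s).trace) = fun s => ∑ k, ∑ j, ρ k j * HH s j k := by
    funext s
    simp [Matrix.trace, Matrix.mul_apply, Matrix.diag]
  have hval : (∑ k, ∑ j, ρ k j * D j k) = (ρ * D).trace := by
    simp [Matrix.trace, Matrix.mul_apply, Matrix.diag]
  rw [heq]
  rw [hval, key] at h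
  exact h
end

section
/- Consider the extended Ehrenfest system ż = 𝕁 ∇_z ⟨ρ|H(z)⟩ − i ⟨Z | [H(z), ρ]⟩ (with ℏ=1), i ρ̇ = [H(z), ρ] + ∇_z⟨ρ|H(z)⟩ · [Z, ρ], where Z = (Z₁,…,Z_{2n}) is a fixed tuple of Hermitian matrices. Then the total energy Tr(ρ(t) H(z(t))) is conserved along solutions. -/
open Matrix

/-- Along solutions of the extended Ehrenfest system (ℏ = 1)
`ż = 𝕁∇_z⟨ρ|H(z)⟩ − i⟨Z|[H(z),ρ]⟩`,
`iρ̇ = [H(z),ρ] + ∇_z⟨ρ|H(z)⟩ · [Z,ρ]`,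
with Z a fixed tuple of Hermitian matrices, the total energy `Tr(ρ(t) H(z(t)))`
is conserved. -/
theorem stmt_14 {n m : ℕ}
    (J : Matrix (Fin (2 * n)) (Fin (2 * n)) ℝ) (hJ : Jᵀ = -J)
    (Z : Fin (2 * n) → Matrix (Fin m) (Fin m) ℂ) (hZ : ∀ k, (Z k)ᴴ = Z k)
    (H : (Fin (2 * n) → ℝ) → Matrix (Fin m) (Fin m) ℂ)
    (Hd : (Fin (2 * n) → ℝ) → Fin (2 * n) → Matrix (Fin m) (Fin m) ℂ)
    (hHerm : ∀ w, (H w)ᴴ = H w) (hHdHerm : ∀ w k, (Hd w k)ᴴ = Hd w k)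
    (z z' : ℝ → Fin (2 * n) → ℝ) (ρ ρ' : ℝ → Matrix (Fin m) (Fin m) ℂ)
    (hρHerm : ∀ t, (ρ t)ᴴ = ρ t)
    (hz : ∀ t k, HasDerivAt (fun s => z s k) (z' t k) t)
    (hρ : ∀ t i j, HasDerivAt (fun s => ρ s i j) (ρ' t i j) t)
    (hchain : ∀ t i j, HasDerivAt (fun s => H (z s) i j)
      (∑ k, (z' t k : ℂ) * Hd (z t) k i j) t)
    (heqz : ∀ t k, z' t k =
      J.mulVec (fun l => ((ρ t * Hd (z t) l).trace).re) k
        - (Complex.I * (Z k * (H (z t) * ρ t - ρ t * H (z t))).trace).re)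
    (heqρ : ∀ t, Complex.I • ρ' t =
      (H (z t) * ρ t - ρ t * H (z t))
        + ∑ k, ((((ρ t * Hd (z t) k).trace).re : ℂ)) • (Z k * ρ t - ρ t * Z k)) :
    ∀ t, HasDerivAt (fun s => (ρ s * H (z s)).trace) 0 t := by
  intro t
  set A := ρ t with hA
  set B := H (z t) with hB
  set C : Matrix (Fin m) (Fin m) ℂ := B * A - A * B with hCdef
  set bv : Fin (2 * n) → ℝ := fun l => ((A * Hd (z t) l).trace).re with hbv
  have hAH : Aᴴ = A := by rw [hA]; exact hρHerm t
  have hBH : Bᴴ = B := by rw [hB]; exact hHerm (z t)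
  have hCH : Cᴴ = -C := by
    rw [hCdef, Matrix.conjTranspose_sub, Matrix.conjTranspose_mul,
      Matrix.conjTranspose_mul, hAH, hBH, neg_sub]
  -- the derivative, entrywise
  have h2 : HasDerivAt (fun s => ∑ i, ∑ j, ρ s i j * H (z s) j i)
      (∑ i, ∑ j, (ρ' t i j * B j i + A i j * ∑ k, (z' t k : ℂ) * Hd (z t) k j i)) t :=
    HasDerivAt.fun_sum (fun i _ => HasDerivAt.fun_sum (fun j _ => (hρ t i j).mul (hchain t j i)))
  have hfun : (fun s => (ρ s * H (z s)).trace)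
      = (fun s => ∑ i, ∑ j, ρ s i j * H (z s) j i) := by
    funext s
    simp [Matrix.trace, Matrix.diag, Matrix.mul_apply]
  -- identify derivative value with traces
  have hval : (∑ i, ∑ j, (ρ' t i j * B j i + A i j * ∑ k, (z' t k : ℂ) * Hd (z t) k j i))
      = (ρ' t * B).trace + ∑ k, (z' t k : ℂ) * (A * Hd (z t) k).trace := by
    have e1 : ∑ i, ∑ j, ρ' t i j * B j i = (ρ' t * B).trace := by
      simp [Matrix.trace, Matrix.diag, Matrix.mul_apply]
    have e2 : ∑ i, ∑ j, A i j * ∑ k, (z' t k : ℂ) * Hd (z t) k j i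
        = ∑ k, (z' t k : ℂ) * (A * Hd (z t) k).trace := by
      simp only [Matrix.trace, Matrix.diag, Matrix.mul_apply, Finset.mul_sum]
      rw [show (∑ i : Fin m, ∑ j : Fin m, ∑ k : Fin (2 * n),
            A i j * ((z' t k : ℂ) * Hd (z t) k j i))
          = ∑ i : Fin m, ∑ k : Fin (2 * n), ∑ j : Fin m,
            A i j * ((z' t k : ℂ) * Hd (z t) k j i) from
        Finset.sum_congr rfl fun i _ => Finset.sum_comm, Finset.sum_comm]
      exact Finset.sum_congr rfl fun k _ => Finset.sum_congr rfl fun i _ =>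
        Finset.sum_congr rfl fun j _ => by ring
    simp only [Finset.sum_add_distrib, e1, e2]
  -- realness of Tr(ρ ∂H)
  have hrealb : ∀ k, (((A * Hd (z t) k).trace).re : ℂ) = (A * Hd (z t) k).trace := by
    intro k
    have h1 : (starRingEnd ℂ) ((A * Hd (z t) k).trace) = (A * Hd (z t) k).trace := by
      rw [← Complex.star_def, ← Matrix.trace_conjTranspose, Matrix.conjTranspose_mul,
        hHdHerm, hAH, Matrix.trace_mul_comm]
    exact Complex.conj_eq_iff_re.mp h1
  -- i·Tr(Z[H,ρ]) is real
  have himag : ∀ k, (((Complex.I * (Z k * C).trace).re : ℂ)) = Complex.I * (Z k * C).trace := by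
    intro k
    have h1 : (starRingEnd ℂ) ((Z k * C).trace) = -((Z k * C).trace) := by
      rw [← Complex.star_def, ← Matrix.trace_conjTranspose, Matrix.conjTranspose_mul,
        hCH, hZ, Matrix.neg_mul, Matrix.trace_neg, Matrix.trace_mul_comm]
    have h2 : (starRingEnd ℂ) (Complex.I * (Z k * C).trace) = Complex.I * (Z k * C).trace := by
      rw [RingHom.map_mul, Complex.conj_I, h1]; ring
    exact Complex.conj_eq_iff_re.mp h2
  -- solve for ρ'
  have hρ't : ρ' t = (-Complex.I) • (C + ∑ k, ((bv k : ℂ)) • (Z k * A - A * Z k)) := by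
    have hr := heqρ t
    rw [← hA, ← hB, ← hCdef] at hr
    rw [← hr, smul_smul]
    simp [Complex.I_mul_I]
  -- Tr(CB) = 0
  have trC : (C * B).trace = 0 := by
    rw [hCdef, Matrix.sub_mul, Matrix.trace_sub, Matrix.trace_mul_cycle A B B, sub_self]
  -- Tr([Z,ρ]B) = -Tr(Z C)
  have trD : ∀ k, ((Z k * A - A * Z k) * B).trace = -(Z k * C).trace := by
    intro k
    rw [hCdef, Matrix.mul_sub, Matrix.trace_sub, Matrix.sub_mul, Matrix.trace_sub, neg_sub,
      Matrix.trace_mul_cycle A (Z k) B, Matrix.trace_mul_cycle B A (Z k),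
      mul_assoc, mul_assoc]
  -- Tr(ρ' B)
  have trρ'B : (ρ' t * B).trace
      = Complex.I * ∑ k, (bv k : ℂ) * (Z k * C).trace := by
    rw [hρ't, Matrix.smul_mul, Matrix.trace_smul, Matrix.add_mul, Matrix.trace_add, trC,
      Finset.sum_mul, Matrix.trace_sum]
    simp only [Matrix.smul_mul, Matrix.trace_smul, trD, smul_eq_mul, zero_add,
      Finset.mul_sum]
    exact Finset.sum_congr rfl fun k _ => by ring
  -- symplectic part vanishes
  have hsymp : ∑ k, J.mulVec bv k * bv k = 0 := by
    have h1 : J.mulVec bv ⬝ᵥ bv = bv ⬝ᵥ J.mulVec bv := dotProduct_comm _ _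
    have h2 : bv ⬝ᵥ J.mulVec bv = -(J.mulVec bv ⬝ᵥ bv) := by
      rw [Matrix.dotProduct_mulVec,
        show Matrix.vecMul bv J = Jᵀ.mulVec bv from (Matrix.mulVec_transpose J bv).symm,
        hJ, Matrix.neg_mulVec, neg_dotProduct]
    have h3 : J.mulVec bv ⬝ᵥ bv = 0 := by
      have := h1.trans h2; linarith
    simpa [dotProduct] using h3
  -- total derivative is zero
  have hzero : (ρ' t * B).trace + ∑ k, (z' t k : ℂ) * (A * Hd (z t) k).trace = 0 := by
    have hz'k : ∀ k, (z' t k : ℂ)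
        = ((J.mulVec bv k : ℝ) : ℂ) - (Complex.I * (Z k * C).trace) := by
      intro k
      have h := heqz t k
      rw [← hA, ← hB, ← hCdef, ← hbv] at h
      rw [h]
      push_cast
      rw [himag k]
    have e3 : ∑ k, (z' t k : ℂ) * (A * Hd (z t) k).trace
        = ∑ k, (((J.mulVec bv k * bv k : ℝ)) : ℂ)
          - ∑ k, (Complex.I * (Z k * C).trace) * (bv k : ℂ) := by
      rw [← Finset.sum_sub_distrib]
      refine Finset.sum_congr rfl fun k _ => ?_
      rw [← hrealb k, hz'k k]
      push_cast
      ring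
    rw [trρ'B, e3, ← Complex.ofReal_sum]
    rw [hsymp]
    rw [Finset.mul_sum]
    push_cast
    rw [zero_sub, ← sub_eq_add_neg, sub_eq_zero]
    exact Finset.sum_congr rfl fun k _ => by ring
  rw [hfun]
  have := h2
  rw [hval, hzero] at this
  exact this
end
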